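/- arXiv:2203.03351 — 4 statements merged into one kernel-verified Lean document; each statement's English description precedes it below -/
import Mathlib

section
/- Let {c_j} be a non-negative real sequence, ς > 0, and define d_k = Σ_{j=0}^{k} c_j. Then for every k ≥ 0, Σ_{j=0}^{k} c_j/(ς + d_j) ≤ log((ς + d_k)/ς). -/
lemma step_ineq {a b : ℝ} (ha : 0 < a) (hab : a ≤ b) :
    (b - a) / b ≤ Real.log b - Real.log a := by
  have hb : 0 < b := lt_of_lt_of_le ha hab
  have h := Real.log_le_sub_one_of_pos (div_pos ha hb)
  rw [Real.log_div ha.ne' hb.ne'] at h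
  have : a / b - 1 = -((b - a) / b) := by field_simp; ring
  linarith [h, this ▸ h]

theorem stmt_4 (c : ℕ → ℝ) (hc : ∀ j, 0 ≤ c j) (ς : ℝ) (hς : 0 < ς) (k : ℕ) :
    ∑ j ∈ Finset.range (k + 1),
        c j / (ς + ∑ i ∈ Finset.range (j + 1), c i)
      ≤ Real.log ((ς + ∑ i ∈ Finset.range (k + 1), c i) / ς) := by
  have hd : ∀ n, 0 < ς + ∑ i ∈ Finset.range n, c i := fun n =>
    add_pos_of_pos_of_nonneg hς (Finset.sum_nonneg fun i _ => hc i)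
  induction k with
  | zero =>
      rw [Real.log_div (hd 1).ne' hς.ne']
      have := step_ineq hς (le_add_of_nonneg_right (hc 0) : ς ≤ ς + c 0)
      simp only [Finset.sum_range_one, Finset.sum_range_succ, Finset.sum_range_zero, zero_add]
      calc c 0 / (ς + c 0) = ((ς + c 0) - ς) / (ς + c 0) := by ring_nf
        _ ≤ Real.log (ς + c 0) - Real.log ς := this
  | succ n ih =>
      rw [Finset.sum_range_succ]
      have hle : ς + ∑ i ∈ Finset.range (n + 1), c i ≤
          ς + ∑ i ∈ Finset.range (n + 2), c i := by
        rw [Finset.sum_range_succ (n := n + 1)]; linarith [hc (n + 1)]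
      have hs := step_ineq (hd (n + 1)) hle
      have hcval : (ς + ∑ i ∈ Finset.range (n + 2), c i) -
          (ς + ∑ i ∈ Finset.range (n + 1), c i) = c (n + 1) := by
        rw [Finset.sum_range_succ (n := n + 1)]; ring
      rw [hcval] at hs
      rw [Real.log_div (hd (n + 2)).ne' hς.ne']
      rw [Real.log_div (hd (n + 1)).ne' hς.ne'] at ih
      linarith
end

section
/- Let w > 0, α ∈ (0,1), and β > 3α/2^α. If w^α ≤ β·log(2w), then w ≤ [−(β/α)·W_{−1}(−α/(β·2^α))]^{1/α}, where W_{−1} is the secondary real branch of the Lambert W function. -/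
open Real Set

/-- The secondary real branch `W₋₁` of the Lambert W function, defined on
`[-1/e, 0)` as the unique `w ≤ -1` with `w * exp w = z`. -/
noncomputable def lambertWm1 (z : ℝ) : ℝ :=
  sInf {w : ℝ | w * Real.exp w = z ∧ w ≤ -1}

lemma xexp_anti : StrictAntiOn (fun x : ℝ => x * Real.exp x) (Set.Iic (-1)) := by
  apply strictAntiOn_of_deriv_neg (convex_Iic _)
  · exact (continuous_id.mul Real.continuous_exp).continuousOn
  · intro x hx
    rw [interior_Iic] at hx
    have hd : HasDerivAt (fun x : ℝ => x * Real.exp x) (1 * Real.exp x + x * Real.exp x) x :=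
      (hasDerivAt_id x).mul (Real.hasDerivAt_exp x)
    rw [hd.deriv]
    have h1 : (0:ℝ) < Real.exp x := Real.exp_pos x
    have h2 : x < -1 := hx
    nlinarith

lemma xexp_exists {y : ℝ} (h0 : y < 0) (h3 : -(1/3) ≤ y) :
    ∃ x, x ≤ -1 ∧ x * Real.exp x = y := by
  set u := -y with hu
  have hu0 : 0 < u := by simp [hu]; linarith
  have hu3 : u ≤ 1/3 := by simp [hu]; linarith
  set A := 2 * Real.log u with hA
  have hlogu : Real.log u ≤ u - 1 := Real.log_le_sub_one_of_pos hu0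
  have hA1 : A ≤ -1 := by
    rw [hA]; nlinarith
  have hmem : y ∈ Set.Icc ((-1 : ℝ) * Real.exp (-1)) (A * Real.exp A) := by
    constructor
    · have h1 : Real.exp 1 < 3 := lt_trans Real.exp_one_lt_d9 (by norm_num)
      have h2 : Real.exp (-1) = (Real.exp 1)⁻¹ := Real.exp_neg 1
      have h3' : (1:ℝ)/3 < Real.exp (-1) := by
        rw [h2]
        rw [lt_inv_comm₀ (by norm_num) (Real.exp_pos 1)]
        · linarith
      linarith
    · have hexpA : Real.exp A = u * u := by
        rw [hA, two_mul, Real.exp_add, Real.exp_log hu0]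
      rw [hexpA, hA]
      -- need: y ≤ 2 log u * (u * u), i.e. -u ≤ 2 u² log u
      set s := Real.sqrt u with hs
      have hs0 : 0 < s := Real.sqrt_pos.mpr hu0
      have hsq : s ^ 2 = u := Real.sq_sqrt hu0.le
      have hlogsu : Real.log u = 2 * Real.log s := by
        rw [← hsq, Real.log_pow]; push_cast; ring
      have hlinv : Real.log s⁻¹ ≤ s⁻¹ - 1 := Real.log_le_sub_one_of_pos (by positivity)
      have hlinv' : -Real.log s ≤ s⁻¹ - 1 := by
        rwa [Real.log_inv] at hlinv
      have hmul : s * s⁻¹ = 1 := by field_simp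
      -- -s log s ≤ 1 - s
      have key : -(s * Real.log s) ≤ 1 - s := by nlinarith
      have hyu : y = -u := by rw [hu]; ring
      rw [hyu, hlogsu, ← hsq]
      nlinarith [mul_le_mul_of_nonneg_left key (by positivity : (0:ℝ) ≤ 4*s^3),
        sq_nonneg (s*(2*s-1)), hs0.le]
  have := intermediate_value_Icc' hA1
    ((continuous_id.mul Real.continuous_exp).continuousOn
      (s := Set.Icc A (-1))) hmem
  obtain ⟨x, hx, hfx⟩ := this
  exact ⟨x, hx.2, hfx⟩

theorem stmt_5 (w α β : ℝ) (hw : 0 < w) (hα : α ∈ Set.Ioo (0 : ℝ) 1)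
    (hβ : 3 * α / 2 ^ α < β) (h : w ^ α ≤ β * Real.log (2 * w)) :
    w ≤ (-(β / α) * lambertWm1 (-α / (β * 2 ^ α))) ^ (1 / α) := by
  obtain ⟨hα0, hα1⟩ := hα
  have h2α : (0:ℝ) < 2 ^ α := Real.rpow_pos_of_pos two_pos α
  have hβpos : 0 < β := by
    have : 0 < 3 * α / 2 ^ α := by positivity
    linarith
  set y := -α / (β * 2 ^ α) with hy
  have hy0 : y < 0 := by
    rw [hy]
    have := div_pos hα0 (mul_pos hβpos h2α)
    rw [neg_div]; linarith
  have hy3 : -(1/3) ≤ y := by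
    rw [hy, neg_div, neg_le_neg_iff]
    rw [div_le_iff₀ (mul_pos hβpos h2α)]
    rw [div_lt_iff₀ h2α] at hβ
    nlinarith
  obtain ⟨x₀, hx1, hx2⟩ := xexp_exists hy0 hy3
  have hS : {v : ℝ | v * Real.exp v = y ∧ v ≤ -1} = {x₀} := by
    ext v
    simp only [Set.mem_setOf_eq, Set.mem_singleton_iff]
    constructor
    · rintro ⟨hv1, hv2⟩
      exact xexp_anti.injOn hv2 hx1 (by rw [hv1, hx2])
    · rintro rfl; exact ⟨hx2, hx1⟩
  have hW : lambertWm1 y = x₀ := by rw [lambertWm1, hS, csInf_singleton]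
  rw [hW]
  set W := x₀ with hWdef
  set t := -(β / α) * W with ht
  have hWneg : W ≤ -1 := hx1
  have hba : 0 < β / α := div_pos hβpos hα0
  have htpos : 0 < t := by rw [ht]; nlinarith
  have htge : β / α ≤ t := by rw [ht]; nlinarith
  -- key exponential relation
  have hx2' : W * Real.exp W * (β * 2 ^ α) = -α := by
    rw [hy] at hx2
    field_simp at hx2
    linarith [hx2]
  have hkey : Real.exp W * (2 ^ α * t) = 1 := by
    rw [ht]
    field_simp
    nlinarith [hx2']
  have hlogt : Real.log t = α / β * t - α * Real.log 2 := by
    have hWeq : W = -(α * Real.log 2 + Real.log t) := by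
      have hexpW : Real.exp W = (2 ^ α * t)⁻¹ := by
        field_simp at hkey ⊢
        linarith [hkey]
      have := Real.log_exp W
      rw [hexpW] at this
      rw [← this, Real.log_inv, Real.log_mul (ne_of_gt h2α) (ne_of_gt htpos),
        Real.log_rpow two_pos]
    have hWt : W = -(α / β) * t := by
      rw [ht]; field_simp
    rw [hWt] at hWeq
    have hαβ : α / β * t = α * Real.log 2 + Real.log t := by linarith
    linarith
  -- monotone function
  have hmono : StrictMonoOn (fun s : ℝ => s - β / α * Real.log s) (Set.Ici (β / α)) := by
    apply strictMonoOn_of_deriv_pos (convex_Ici _)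
    · apply ContinuousOn.sub continuousOn_id
      apply ContinuousOn.mul continuousOn_const
      apply Real.continuousOn_log.mono
      intro s hs
      simp only [Set.mem_compl_iff, Set.mem_singleton_iff]
      have : β / α ≤ s := hs
      intro h0; rw [h0] at this; linarith
    · intro s hs
      rw [interior_Ici] at hs
      have hs0 : 0 < s := lt_trans hba hs
      have hd : HasDerivAt (fun s : ℝ => s - β / α * Real.log s) (1 - β / α * s⁻¹) s :=
        (hasDerivAt_id s).sub ((Real.hasDerivAt_log (ne_of_gt hs0)).const_mul (β / α))
      rw [hd.deriv]
      have hinv : 0 < s⁻¹ := inv_pos.mpr hs0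
      have : β / α * s⁻¹ < 1 := by
        rw [← div_eq_mul_inv, div_lt_one hs0]; exact hs
      linarith
  have hft : t - β / α * Real.log t = β * Real.log 2 := by
    rw [hlogt]; field_simp; ring
  have hfw : w ^ α - β / α * Real.log (w ^ α) ≤ β * Real.log 2 := by
    rw [Real.log_rpow hw]
    rw [Real.log_mul (by norm_num) (ne_of_gt hw)] at h
    have : β / α * (α * Real.log w) = β * Real.log w := by field_simp
    rw [this]
    have h' : β * (Real.log 2 + Real.log w) = β * Real.log 2 + β * Real.log w := by ring
    linarith
  have hwt : w ^ α ≤ t := by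
    by_contra hlt
    push_neg at hlt
    have hmem1 : t ∈ Set.Ici (β / α) := htge
    have hmem2 : w ^ α ∈ Set.Ici (β / α) := le_of_lt (lt_of_le_of_lt htge hlt)
    have := hmono hmem1 hmem2 hlt
    simp only at this
    linarith
  -- conclude
  calc w = (w ^ α) ^ (1 / α) := by
        rw [← Real.rpow_mul hw.le, mul_one_div, div_self (ne_of_gt hα0), Real.rpow_one]
    _ ≤ t ^ (1 / α) := Real.rpow_le_rpow (Real.rpow_nonneg hw.le α) hwt (by positivity)
end

section
/- Let a ≥ 0, b ≥ 0, μ ∈ (0,½), ν ∈ (0,⅓), θ_a > 0, θ_b > 0, θ ≥ 0, and suppose a^{1−μ} + b^{1−2ν} ≤ θ_a·a^{1−2μ} + θ_b·b^{1−3ν} + θ. Then a ≤ max[(θ/θ_a)^{1/(1−2μ)}, 2^{1/(1−μ)}·(2θ_b)^{(1−2ν)/(ν(1−μ))}, (4θ_a)^{1/μ}] and b ≤ max[(θ/θ_b)^{1/(1−3ν)}, 2^{1/(1−2ν)}·(2θ_a)^{(1−μ)/(μ(1−2ν))}, (4θ_b)^{1/ν}]. -/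
private lemma rle9 (x y p : ℝ) (hx : 0 ≤ x) (hp : 0 < p) (hxy : x ^ p ≤ y) :
    x ≤ y ^ (1 / p) := by
  calc x = (x ^ p) ^ (1 / p) := by
        rw [← Real.rpow_mul hx, mul_one_div, div_self hp.ne', Real.rpow_one]
    _ ≤ y ^ (1 / p) :=
        Real.rpow_le_rpow (Real.rpow_nonneg hx p) hxy (by positivity)

private lemma rlt9 (x y p : ℝ) (hy : 0 ≤ y) (hp : 0 < p) (hxy : y ^ (1 / p) < x) :
    y < x ^ p := by
  calc y = (y ^ (1 / p)) ^ p := by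
        rw [← Real.rpow_mul hy, one_div_mul_cancel hp.ne', Real.rpow_one]
    _ < x ^ p := Real.rpow_lt_rpow (Real.rpow_nonneg hy _) hxy hp

private lemma key9 (a b μ ν α β θa θb θ : ℝ) (ha : 0 ≤ a) (hb : 0 ≤ b)
    (hμ : 0 < μ) (hαμ : 0 < α - μ) (hν : 0 < ν) (hβν : 0 < β - ν)
    (hθa : 0 < θa) (hθb : 0 < θb) (hθ : 0 ≤ θ)
    (h : a ^ α + b ^ β ≤ θa * a ^ (α - μ) + θb * b ^ (β - ν) + θ) :
    a ≤ max ((θ / θa) ^ (1 / (α - μ)))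
          (max ((2 : ℝ) ^ (1 / α) * (2 * θb) ^ (β / (ν * α))) ((4 * θa) ^ (1 / μ))) := by
  have hα : 0 < α := by linarith
  rcases le_or_gt a ((θ / θa) ^ (1 / (α - μ))) with hc | hc
  · exact le_max_of_le_left hc
  have ha' : 0 < a := lt_of_le_of_lt (Real.rpow_nonneg (by positivity) _) hc
  have hθlt : θ < θa * a ^ (α - μ) := by
    have h1 : θ / θa < a ^ (α - μ) := rlt9 a (θ / θa) (α - μ) (by positivity) hαμ hc
    calc θ = θa * (θ / θa) := by field_simp
      _ < θa * a ^ (α - μ) := (mul_lt_mul_iff_right₀ hθa).mpr h1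
  have h2 : a ^ α + b ^ β ≤ 2 * θa * a ^ (α - μ) + θb * b ^ (β - ν) := by linarith
  have split : a ^ μ * a ^ (α - μ) = a ^ α := by
    rw [← Real.rpow_add ha']; congr 1; ring
  have hapos : 0 < a ^ (α - μ) := Real.rpow_pos_of_pos ha' _
  rcases le_or_gt θb (b ^ ν) with hb2 | hb2
  · have hbpos : 0 < b := by
      rcases eq_or_lt_of_le hb with e | e
      · exfalso; rw [← e, Real.zero_rpow hν.ne'] at hb2; linarith
      · exact e
    have hbb : θb * b ^ (β - ν) ≤ b ^ β := by
      calc θb * b ^ (β - ν) ≤ b ^ ν * b ^ (β - ν) :=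
            mul_le_mul_of_nonneg_right hb2 (Real.rpow_nonneg hb _)
        _ = b ^ β := by rw [← Real.rpow_add hbpos]; congr 1; ring
    have h3 : a ^ μ * a ^ (α - μ) ≤ 2 * θa * a ^ (α - μ) := by rw [split]; linarith
    have h4 : a ^ μ ≤ 4 * θa := by
      have := le_of_mul_le_mul_right h3 hapos; linarith
    exact le_max_of_le_right (le_max_of_le_right (rle9 a _ μ ha hμ h4))
  · have hbθ : b ≤ θb ^ (1 / ν) := rle9 b θb ν hb hν hb2.le
    have hbe : b ^ (β - ν) ≤ θb ^ ((β - ν) / ν) := by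
      calc b ^ (β - ν) ≤ (θb ^ (1 / ν)) ^ (β - ν) := Real.rpow_le_rpow hb hbθ hβν.le
        _ = θb ^ ((β - ν) / ν) := by rw [← Real.rpow_mul hθb.le]; congr 1; ring
    have hC : θb * b ^ (β - ν) ≤ θb ^ (β / ν) := by
      calc θb * b ^ (β - ν) ≤ θb * θb ^ ((β - ν) / ν) :=
            mul_le_mul_of_nonneg_left hbe hθb.le
        _ = θb ^ (1 + (β - ν) / ν) := by rw [Real.rpow_add hθb, Real.rpow_one]
        _ = θb ^ (β / ν) := by congr 1; field_simp; ring
    have h5 : a ^ α ≤ 2 * θa * a ^ (α - μ) + θb ^ (β / ν) := by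
      have := Real.rpow_nonneg hb β; linarith
    rcases le_or_gt (a ^ α / 2) (2 * θa * a ^ (α - μ)) with h6 | h6
    · have h7 : a ^ μ * a ^ (α - μ) ≤ (4 * θa) * a ^ (α - μ) := by rw [split]; linarith
      have h8 : a ^ μ ≤ 4 * θa := le_of_mul_le_mul_right h7 hapos
      exact le_max_of_le_right (le_max_of_le_right (rle9 a _ μ ha hμ h8))
    · have h9 : a ^ α ≤ 2 * θb ^ (β / ν) := by linarith
      have h10 : a ≤ (2 * θb ^ (β / ν)) ^ (1 / α) := rle9 a _ α ha hα h9
      have h11 : (2 * θb ^ (β / ν)) ^ (1 / α) = 2 ^ (1 / α) * θb ^ (β / (ν * α)) := by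
        rw [Real.mul_rpow (by norm_num) (Real.rpow_nonneg hθb.le _),
          ← Real.rpow_mul hθb.le]
        congr 2
        field_simp
      have h12 : θb ^ (β / (ν * α)) ≤ (2 * θb) ^ (β / (ν * α)) :=
        Real.rpow_le_rpow hθb.le (by linarith) (div_nonneg (by linarith) (mul_nonneg hν.le hα.le))
      refine le_max_of_le_right (le_max_of_le_left ?_)
      calc a ≤ 2 ^ (1 / α) * θb ^ (β / (ν * α)) := by rw [← h11]; exact h10
        _ ≤ 2 ^ (1 / α) * (2 * θb) ^ (β / (ν * α)) :=
            mul_le_mul_of_nonneg_left h12 (by positivity)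

theorem stmt_9 (a b μ ν θa θb θ : ℝ)
    (ha : 0 ≤ a) (hb : 0 ≤ b)
    (hμ : μ ∈ Set.Ioo (0 : ℝ) (1/2)) (hν : ν ∈ Set.Ioo (0 : ℝ) (1/3))
    (hθa : 0 < θa) (hθb : 0 < θb) (hθ : 0 ≤ θ)
    (h : a ^ (1 - μ) + b ^ (1 - 2*ν)
          ≤ θa * a ^ (1 - 2*μ) + θb * b ^ (1 - 3*ν) + θ) :
    a ≤ max ((θ / θa) ^ (1 / (1 - 2*μ)))
          (max ((2 : ℝ) ^ (1 / (1 - μ)) * (2*θb) ^ ((1 - 2*ν) / (ν * (1 - μ))))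
               ((4*θa) ^ (1 / μ))) ∧
    b ≤ max ((θ / θb) ^ (1 / (1 - 3*ν)))
          (max ((2 : ℝ) ^ (1 / (1 - 2*ν)) * (2*θa) ^ ((1 - μ) / (μ * (1 - 2*ν))))
               ((4*θb) ^ (1 / ν))) := by
  obtain ⟨hμ1, hμ2⟩ := hμ
  obtain ⟨hν1, hν2⟩ := hν
  have e1 : (1 - μ) - μ = 1 - 2*μ := by ring
  have e2 : (1 - 2*ν) - ν = 1 - 3*ν := by ring
  constructor
  · have ka := key9 a b μ ν (1 - μ) (1 - 2*ν) θa θb θ ha hb hμ1 (by linarith) hν1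
      (by linarith) hθa hθb hθ (by rw [e1, e2]; exact h)
    rwa [e1] at ka
  · have kb := key9 b a ν μ (1 - 2*ν) (1 - μ) θb θa θ hb ha hν1 (by linarith) hμ1
      (by linarith) hθb hθa hθ (by rw [e1, e2]; linarith)
    rwa [e2] at kb
end

section
/- Let a > 0, b ≥ 0, ν ∈ (0,⅓], θ_a ≥ 1, θ ≥ 0. If a^{1/2} + b^{1−2ν} ≤ θ_a·log(2a) + θ, then a ≤ κ_a := max[½·e^{θ/θ_a}, σ(½, 2θ_a)] and b ≤ (θ_a·log(2κ_a) + θ)^{1/(1−2ν)}, where σ(α,β) := [−(β/α)·W_{−1}(−α/(β·2^α))]^{1/α}. -/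
/-- `σ(α,β)` from the paper. -/
noncomputable def sigmaAB (α β : ℝ) : ℝ :=
  (-(β / α) * lambertWm1 (-α / (β * 2 ^ α))) ^ (1 / α)

private lemma lw_strictAnti : StrictAntiOn (fun w : ℝ => w * Real.exp w) (Set.Iic (-1)) := by
  have hc : Continuous fun w : ℝ => w * Real.exp w := by continuity
  apply strictAntiOn_of_deriv_neg (convex_Iic _) hc.continuousOn
  intro x hx
  rw [interior_Iic] at hx
  have hd : HasDerivAt (fun w : ℝ => w * Real.exp w) (1 * Real.exp x + x * Real.exp x) x :=
    (hasDerivAt_id x).mul (Real.hasDerivAt_exp x)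
  rw [hd.deriv]
  have hex : 0 < Real.exp x := Real.exp_pos x
  have hx1 : x < -1 := hx
  nlinarith

private lemma lambertWm1_spec {z : ℝ} (h1 : -Real.exp (-1) < z) (h2 : z < 0) :
    lambertWm1 z * Real.exp (lambertWm1 z) = z ∧ lambertWm1 z < -1 := by
  have hzpos : 0 < -z := by linarith
  have hzlt : -z < Real.exp (-1) := by linarith
  set L := Real.log (-z) with hL
  have hLlt : L < -1 := by
    have := Real.log_lt_log hzpos hzlt
    rwa [Real.log_exp] at this
  have hw1 : 2 * L ≤ -1 := by linarith
  -- key numeric fact: -L * (-z) ≤ exp (-1) < 1/2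
  have hzne : (-z) ≠ 0 := ne_of_gt hzpos
  have hlogle : -L ≤ (-z)⁻¹ * Real.exp (-1) := by
    have hu : (0:ℝ) < (-z)⁻¹ * Real.exp (-1) := by positivity
    have := Real.log_le_sub_one_of_pos hu
    rw [Real.log_mul (by positivity) (Real.exp_ne_zero _), Real.log_exp,
      Real.log_inv] at this
    linarith
  have hLz : -L * (-z) ≤ Real.exp (-1) := by
    have h' := mul_le_mul_of_nonneg_right hlogle (le_of_lt hzpos)
    have heq : (-z)⁻¹ * Real.exp (-1) * (-z) = Real.exp (-1) := by
      rw [mul_right_comm, inv_mul_cancel₀ hzne, one_mul]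
    linarith [heq ▸ h']
  have hehalf : Real.exp (-1) < 1/2 := by
    rw [Real.exp_neg]
    rw [inv_lt_comm₀ (Real.exp_pos 1) (by norm_num)]
    have := Real.exp_one_gt_d9
    linarith
  -- existence via IVT on [2L, -1]
  have hcont : ContinuousOn (fun w : ℝ => w * Real.exp w) (Set.Icc (2*L) (-1)) :=
    (continuous_id.mul Real.continuous_exp).continuousOn
  have hfm1 : (-1 : ℝ) * Real.exp (-1) ≤ z := by linarith [neg_one_mul (Real.exp (-1:ℝ))]
  have hfw1 : z ≤ (2*L) * Real.exp (2*L) := by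
    have he : Real.exp (2*L) = (-z)^2 := by
      rw [two_mul, Real.exp_add, ← Real.exp_log hzpos]
      ring
    rw [he]
    nlinarith
  have hmem : z ∈ Set.Icc ((-1:ℝ) * Real.exp (-1)) ((2*L) * Real.exp (2*L)) :=
    ⟨hfm1, hfw1⟩
  obtain ⟨w₀, hw₀mem, hw₀beta⟩ := intermediate_value_Icc' hw1 hcont hmem
  have hw₀ : w₀ * Real.exp w₀ = z := hw₀beta
  have hw₀le : w₀ ≤ -1 := hw₀mem.2
  have hset : {w : ℝ | w * Real.exp w = z ∧ w ≤ -1} = {w₀} := by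
    ext w
    simp only [Set.mem_setOf_eq, Set.mem_singleton_iff]
    constructor
    · rintro ⟨hwe, hwle⟩
      exact lw_strictAnti.injOn hwle hw₀le (by rw [hwe, hw₀])
    · rintro rfl
      exact ⟨hw₀, hw₀le⟩
  have heq : lambertWm1 z = w₀ := by
    rw [lambertWm1, hset, csInf_singleton]
  rw [heq]
  refine ⟨hw₀, lt_of_le_of_ne hw₀le ?_⟩
  intro hcon
  rw [hcon, neg_one_mul] at hw₀
  linarith

set_option maxHeartbeats 1000000 in
theorem stmt_11 (a b ν θa θ : ℝ) (ha : 0 < a) (hb : 0 ≤ b)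
    (hν : ν ∈ Set.Ioc (0 : ℝ) (1/3)) (hθa : 1 ≤ θa) (hθ : 0 ≤ θ)
    (h : a ^ ((1:ℝ)/2) + b ^ (1 - 2*ν) ≤ θa * Real.log (2*a) + θ) :
    a ≤ max ((1/2) * Real.exp (θ / θa)) (sigmaAB (1/2) (2*θa)) ∧
    b ≤ (θa * Real.log (2 * max ((1/2) * Real.exp (θ / θa)) (sigmaAB (1/2) (2*θa)))
          + θ) ^ (1 / (1 - 2*ν)) := by
  obtain ⟨hν0, hν3⟩ := hν
  have hθa0 : (0:ℝ) < θa := lt_of_lt_of_le one_pos hθa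
  set sq2 : ℝ := Real.sqrt 2 with hsq2def
  have hsq2sq : sq2 ^ 2 = 2 := Real.sq_sqrt (by norm_num)
  have hsq2pos : 0 < sq2 := Real.sqrt_pos.mpr (by norm_num)
  have hsq2ge1 : 1 ≤ sq2 := by nlinarith
  set z : ℝ := -(1/2 : ℝ) / (2*θa * sq2) with hzdef
  have hz2 : z < 0 := by
    apply div_neg_of_neg_of_pos (by norm_num)
    positivity
  have hz1 : -Real.exp (-1) < z := by
    have he1 : Real.exp 1 < 4 * θa * sq2 := by
      have := Real.exp_one_lt_d9
      nlinarith
    have hinv : Real.exp (-1) = (Real.exp 1)⁻¹ := by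
      rw [Real.exp_neg]
    have hzval : -z = (4 * θa * sq2)⁻¹ := by
      rw [hzdef]
      field_simp
      ring
    have : (4 * θa * sq2)⁻¹ < (Real.exp 1)⁻¹ :=
      inv_strictAnti₀ (Real.exp_pos 1) he1
    rw [hinv]
    linarith [hzval ▸ this]
  obtain ⟨hwz, hwlt⟩ := lambertWm1_spec hz1 hz2
  set w : ℝ := lambertWm1 z with hwdef
  set u : ℝ := -(4*θa*w) with hudef
  have hu4 : 4*θa < u := by
    rw [hudef]; nlinarith
  have hupos : 0 < u := by linarith
  have hwne : w ≠ 0 := by intro hc; rw [hc] at hwlt; linarith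
  -- exp w = 1 / (sq2 * u)
  have hθane : θa ≠ 0 := ne_of_gt hθa0
  have hsq2ne : sq2 ≠ 0 := ne_of_gt hsq2pos
  have hmul : (sq2 * u) * Real.exp w = 1 := by
    have h2 : w * Real.exp w * (2*θa*sq2) = -(1/2) := by
      rw [hwz, hzdef]
      field_simp
    have hue : u = -(4*θa*w) := hudef
    linear_combination (-2 : ℝ) * h2 + Real.exp w * sq2 * hue
  have hexpw : Real.exp w = (sq2 * u)⁻¹ := (inv_eq_of_mul_eq_one_right hmul).symm
  have hwlog : w = -Real.log (sq2 * u) := by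
    have : Real.log (Real.exp w) = Real.log (sq2 * u)⁻¹ := by rw [hexpw]
    rw [Real.log_exp, Real.log_inv] at this
    linarith
  have hmw : -w = Real.log (sq2 * u) := by linarith [hwlog]
  have hkey : u = 4 * θa * Real.log (sq2 * u) := by
    rw [← hmw]
    linear_combination hudef
  -- sigma value
  have hsigma : sigmaAB (1/2) (2*θa) = u ^ 2 := by
    rw [sigmaAB]
    have harg : -(1/2 : ℝ) / (2*θa * (2:ℝ) ^ ((1:ℝ)/2)) = z := by
      rw [hzdef, ← Real.sqrt_eq_rpow]
    have hcoef : -((2*θa) / (1/2 : ℝ)) * lambertWm1 z = u := by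
      rw [← hwdef, hudef]; ring
    rw [show ((1:ℝ)/(1/2)) = (2:ℝ) by norm_num]
    rw [show (-(1/2:ℝ) / (2*θa * (2:ℝ) ^ ((1:ℝ)/2))) = z from harg, hcoef, Real.rpow_two]
  set s : ℝ := sigmaAB (1/2) (2*θa) with hsdef
  have hs : s = u ^ 2 := hsigma
  -- main claim
  have claim : ∀ x : ℝ, s < x → 2 * θa * Real.log (2*x) < x ^ ((1:ℝ)/2) := by
    intro x hx
    have hxpos : 0 < x := by rw [hs] at hx; nlinarith
    set X : ℝ := Real.sqrt x with hXdef
    have hXsq : X ^ 2 = x := Real.sq_sqrt hxpos.le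
    have hXpos : 0 < X := Real.sqrt_pos.mpr hxpos
    have hXu : u < X := by
      nlinarith [hs ▸ hx]
    have hrpow : x ^ ((1:ℝ)/2) = X := (Real.sqrt_eq_rpow x).symm
    rw [hrpow]
    have hlog2x : Real.log (2*x) = 2 * Real.log (sq2 * X) := by
      have h2x : 2 * x = (sq2 * X)^2 := by
        rw [mul_pow, hsq2sq, hXsq]
      rw [h2x, Real.log_pow]
      push_cast; ring
    have hsplit : Real.log (sq2 * X) = Real.log (sq2 * u) + Real.log (X / u) := by
      rw [← Real.log_mul (by positivity) (by positivity)]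
      congr 1
      field_simp
    have hlx : Real.log (X / u) ≤ X / u - 1 :=
      Real.log_le_sub_one_of_pos (by positivity)
    have hlxpos : 0 ≤ Real.log (X / u) := by
      apply Real.log_nonneg
      rw [le_div_iff₀ hupos]; linarith
    have h4θa : (0:ℝ) < 4 * θa := by linarith
    -- 2θa log(2x) = u + 4θa log(X/u) < u + (X - u) = X
    have e1 : 2 * θa * Real.log (2*x) = u + 4 * θa * Real.log (X / u) := by
      rw [hlog2x, hsplit]
      linear_combination (-1 : ℝ) * hkey
    rw [e1]
    have e2 : 4 * θa * Real.log (X / u) ≤ 4 * θa * (X / u - 1) :=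
      mul_le_mul_of_nonneg_left hlx h4θa.le
    have e3 : 4 * θa * (X / u - 1) < X - u := by
      rw [div_sub_one (ne_of_gt hupos), ← mul_div_assoc, div_lt_iff₀ hupos]
      nlinarith [mul_pos (sub_pos.mpr hu4) (sub_pos.mpr hXu)]
    linarith
  -- part 1
  set κ : ℝ := max ((1/2) * Real.exp (θ / θa)) s with hκdef
  have hκpos : 0 < κ := lt_max_of_lt_left (by positivity)
  have hbp : 0 ≤ b ^ (1 - 2*ν) := Real.rpow_nonneg hb _
  have ha2 : a ^ ((1:ℝ)/2) ≤ θa * Real.log (2*a) + θ := by linarith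
  have harpos : 0 ≤ a ^ ((1:ℝ)/2) := Real.rpow_nonneg ha.le _
  have part1 : a ≤ κ := by
    by_contra hcon
    push_neg at hcon
    have hc1 : (1/2) * Real.exp (θ / θa) < a := lt_of_le_of_lt (le_max_left _ _) hcon
    have hc2 : s < a := lt_of_le_of_lt (le_max_right _ _) hcon
    have hθlt : θ < θa * Real.log (2*a) := by
      have : Real.exp (θ / θa) < 2 * a := by linarith
      have hlt : θ / θa < Real.log (2*a) := (Real.lt_log_iff_exp_lt (by linarith)).mpr this
      calc θ = θa * (θ / θa) := by field_simp
        _ < θa * Real.log (2*a) := by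
            exact mul_lt_mul_of_pos_left hlt hθa0
    have := claim a hc2
    linarith
  refine ⟨part1, ?_⟩
  -- part 2
  have hp0 : 0 < 1 - 2*ν := by linarith
  have hloga : Real.log (2*a) ≤ Real.log (2*κ) := by
    apply Real.log_le_log (by linarith)
    linarith
  have hM : b ^ (1 - 2*ν) ≤ θa * Real.log (2*κ) + θ := by
    nlinarith [mul_le_mul_of_nonneg_left hloga hθa0.le]
  have hbM : b ≤ (θa * Real.log (2*κ) + θ) ^ (1 / (1 - 2*ν)) := by
    have hbback : (b ^ (1 - 2*ν)) ^ ((1:ℝ) / (1 - 2*ν)) = b := by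
      rw [← Real.rpow_mul hb, mul_one_div, div_self (ne_of_gt hp0), Real.rpow_one]
    calc b = (b ^ (1 - 2*ν)) ^ ((1:ℝ) / (1 - 2*ν)) := hbback.symm
      _ ≤ (θa * Real.log (2*κ) + θ) ^ (1 / (1 - 2*ν)) :=
          Real.rpow_le_rpow hbp hM (by positivity)
  exact hbM
end
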